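/- For all quaternion matrices A, X ∈ ℍ^{M×N}, ‖A − FQDCT^L(X)‖_F = ‖IQDCT^L(A) − X‖_F; that is, the residual of a quaternion matrix against the left QDCT of X has the same Frobenius norm as the residual of the left inverse QDCT of that matrix against X. -/

import Mathlib

open Matrix

/-- Normalization factor of the DCT: `α(u) = √(1/M)` if `u = 0`, `√(2/M)` otherwise. -/
noncomputable def dctAlpha (M : ℕ) (u : Fin M) : ℝ :=
  if (u : ℕ) = 0 then Real.sqrt (1 / M) else Real.sqrt (2 / M)

/-- DCT kernel `N(u,v,m,n) = cos(π(2m+1)u/(2M)) · cos(π(2n+1)v/(2N))`. -/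
noncomputable def dctKer (M N : ℕ) (u : Fin M) (v : Fin N) (m : Fin M) (n : Fin N) : ℝ :=
  Real.cos (Real.pi * (2 * (m : ℝ) + 1) * (u : ℝ) / (2 * (M : ℝ))) *
    Real.cos (Real.pi * (2 * (n : ℝ) + 1) * (v : ℝ) / (2 * (N : ℝ)))

/-- Left forward quaternion discrete cosine transform:
`FQDCT^L(Q)(u,v) = α(u)β(v) Σ_m Σ_n q̇ · Q(m,n) · N(u,v,m,n)`. -/
noncomputable def FQDCTL (M N : ℕ) (q : Quaternion ℝ)
    (Q : Matrix (Fin M) (Fin N) (Quaternion ℝ)) :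
    Matrix (Fin M) (Fin N) (Quaternion ℝ) :=
  Matrix.of fun u v =>
    (dctAlpha M u * dctAlpha N v) •
      ∑ m : Fin M, ∑ n : Fin N, (dctKer M N u v m n) • (q * Q m n)

/-- Left inverse quaternion discrete cosine transform:
`IQDCT^L(C)(m,n) = Σ_u Σ_v α(u)β(v) · q̇⁻¹ · C(u,v) · N(u,v,m,n)` with `q̇⁻¹ = −q̇`. -/
noncomputable def IQDCTL (M N : ℕ) (q : Quaternion ℝ)
    (C : Matrix (Fin M) (Fin N) (Quaternion ℝ)) :
    Matrix (Fin M) (Fin N) (Quaternion ℝ) :=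
  Matrix.of fun m n =>
    ∑ u : Fin M, ∑ v : Fin N,
      (dctAlpha M u * dctAlpha N v) • ((dctKer M N u v m n) • ((-q) * C u v))

/-- Frobenius norm of a quaternion matrix: `‖A‖_F = sqrt(Σ_{m,n} |A(m,n)|²)`. -/
noncomputable def frob {M N : ℕ} (A : Matrix (Fin M) (Fin N) (Quaternion ℝ)) : ℝ :=
  Real.sqrt (∑ m : Fin M, ∑ n : Fin N, ‖A m n‖ ^ 2)


/-! ### Auxiliary lemmas for the proof -/

open Real in
private lemma tele_sum' (θ : ℝ) (M : ℕ) :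
    ∑ m ∈ Finset.range M, (2 * Real.sin θ * Real.cos ((2 * (m:ℝ) + 1) * θ))
      = Real.sin (2 * M * θ) := by
  have h : ∀ m : ℕ, 2 * Real.sin θ * Real.cos ((2 * (m:ℝ) + 1) * θ)
      = Real.sin (2 * ((m:ℝ)+1) * θ) - Real.sin (2 * (m:ℝ) * θ) := by
    intro m
    have e1 : 2 * ((m:ℝ)+1) * θ = (2*(m:ℝ)+1)*θ + θ := by ring
    have e2 : 2 * (m:ℝ) * θ = (2*(m:ℝ)+1)*θ - θ := by ring
    rw [e1, e2, Real.sin_add, Real.sin_sub]; ring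
  simp_rw [h]
  have := Finset.sum_range_sub (fun m : ℕ => Real.sin (2 * (m:ℝ) * θ)) M
  simp only [Nat.cast_add, Nat.cast_one] at this ⊢
  rw [this]
  simp

private lemma sum_cos_zero' (M : ℕ) (c : ℝ) (h1 : Real.sin c ≠ 0)
    (h2 : Real.sin (2*M*c) = 0) :
    ∑ m ∈ Finset.range M, Real.cos ((2 * (m:ℝ) + 1) * c) = 0 := by
  have := tele_sum' c M
  rw [h2, ← Finset.mul_sum] at this
  have h2s : (2 : ℝ) * Real.sin c ≠ 0 := by positivity
  exact (mul_eq_zero.mp this).resolve_left h2s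

open Real in
private lemma sin_ne_zero_of' (x : ℝ) (h0 : x ≠ 0) (h1 : |x| < π) : Real.sin x ≠ 0 := by
  rcases lt_or_gt_of_ne h0 with h | h
  · have : Real.sin (-x) > 0 := Real.sin_pos_of_pos_of_lt_pi (by linarith) (by
      rcases abs_lt.mp h1 with ⟨ha, hb⟩; linarith)
    simp only [Real.sin_neg] at this; linarith
  · have : Real.sin x > 0 := Real.sin_pos_of_pos_of_lt_pi h (by
      rcases abs_lt.mp h1 with ⟨ha, hb⟩; linarith)
    linarith

open Real in
private lemma sum_cos_k' (M : ℕ) (hM : 0 < M) (k : ℤ) (hk : |k| < 2*M) :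
    ∑ m ∈ Finset.range M, Real.cos ((2 * (m:ℝ) + 1) * (π * k / (2*M)))
      = if k = 0 then (M:ℝ) else 0 := by
  rcases eq_or_ne k 0 with h | h
  · simp [h]
  · rw [if_neg h]
    apply sum_cos_zero'
    · apply sin_ne_zero_of'
      · have hM' : (0:ℝ) < M := by exact_mod_cast hM
        have : (k:ℝ) ≠ 0 := by exact_mod_cast h
        positivity
      · rw [abs_div, abs_mul, abs_of_pos Real.pi_pos]
        rw [div_lt_iff₀ (by positivity)]
        have : |(k:ℝ)| < 2*M := by
          rw [← Int.cast_abs]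
          exact_mod_cast hk
        have h2M : |(2*(M:ℝ))| = 2*M := abs_of_pos (by positivity)
        rw [h2M]
        nlinarith [Real.pi_pos, abs_nonneg (k:ℝ)]
    · have hM' : (M:ℝ) ≠ 0 := by positivity
      have : 2 * (M:ℝ) * (π * k / (2*M)) = k * π := by field_simp
      rw [this]
      exact Real.sin_int_mul_pi k

open Real in
private lemma sum_coscos' (M : ℕ) (hM : 0 < M) (a b : ℕ) (ha : a < M) (hb : b < M) :
    ∑ m ∈ Finset.range M,
        Real.cos ((2*(m:ℝ)+1) * (π*a/(2*M))) * Real.cos ((2*(m:ℝ)+1) * (π*b/(2*M)))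
      = (if a = b then (M:ℝ)/2 else 0) + (if a = 0 ∧ b = 0 then (M:ℝ)/2 else 0) := by
  have pf : ∀ x y : ℝ, Real.cos x * Real.cos y = (Real.cos (x-y) + Real.cos (x+y))/2 := by
    intro x y; rw [Real.cos_sub, Real.cos_add]; ring
  simp_rw [pf]
  have e1 : ∀ m : ℕ, (2*(m:ℝ)+1) * (π*a/(2*M)) - (2*(m:ℝ)+1) * (π*b/(2*M))
      = (2*(m:ℝ)+1) * (π*(((a:ℤ) - b : ℤ):ℝ)/(2*M)) := by intro m; push_cast; ring
  have e2 : ∀ m : ℕ, (2*(m:ℝ)+1) * (π*a/(2*M)) + (2*(m:ℝ)+1) * (π*b/(2*M))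
      = (2*(m:ℝ)+1) * (π*(((a:ℤ) + b : ℤ):ℝ)/(2*M)) := by intro m; push_cast; ring
  simp_rw [e1, e2]
  rw [← Finset.sum_div, Finset.sum_add_distrib]
  rw [sum_cos_k' M hM ((a:ℤ)-b) (by rw [abs_lt]; omega),
    sum_cos_k' M hM ((a:ℤ)+b) (by rw [abs_lt]; omega)]
  have h1 : ((a:ℤ) - b = 0) ↔ a = b := by omega
  have h2 : ((a:ℤ) + b = 0) ↔ (a = 0 ∧ b = 0) := by omega
  simp only [h1, h2]
  split_ifs <;> ring

/-- The real DCT-II matrix. -/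
noncomputable def Dmat (M : ℕ) : Matrix (Fin M) (Fin M) ℝ :=
  Matrix.of fun u m => dctAlpha M u * Real.cos (Real.pi * (2*(m:ℝ)+1) * (u:ℝ) / (2*(M:ℝ)))

open Real in
private lemma row_orth (M : ℕ) (hM : 0 < M) (u u' : Fin M) :
    ∑ m : Fin M, Dmat M u m * Dmat M u' m = if u = u' then 1 else 0 := by
  have hMR : (0:ℝ) < M := by exact_mod_cast hM
  simp only [Dmat, Matrix.of_apply]
  have harg : ∀ (w m : Fin M), Real.pi * (2*(m:ℝ)+1) * (w:ℝ) / (2*(M:ℝ))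
      = (2*(m:ℝ)+1) * (π*(w:ℝ)/(2*(M:ℝ))) := by intros; ring
  simp_rw [harg, mul_mul_mul_comm, ← Finset.mul_sum]
  rw [Fin.sum_univ_eq_sum_range (fun m : ℕ =>
    Real.cos ((2*(m:ℝ)+1) * (π*(u:ℝ)/(2*(M:ℝ)))) *
      Real.cos ((2*(m:ℝ)+1) * (π*(u':ℝ)/(2*(M:ℝ)))))]
  rw [sum_coscos' M hM u u' u.isLt u'.isLt]
  rcases eq_or_ne u u' with h | h
  · subst h
    rw [if_pos rfl, if_pos rfl]
    rcases eq_or_ne (u:ℕ) 0 with h0 | h0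
    · rw [if_pos ⟨h0, h0⟩]
      simp only [dctAlpha, if_pos h0]
      rw [Real.mul_self_sqrt (by positivity : (0:ℝ) ≤ 1/(M:ℝ))]
      field_simp
      norm_num
    · rw [if_neg (fun hc => h0 hc.1)]
      simp only [dctAlpha, if_neg h0]
      rw [Real.mul_self_sqrt (by positivity : (0:ℝ) ≤ 2/(M:ℝ))]
      field_simp
      ring
  · rw [if_neg h]
    have hv : (u:ℕ) ≠ (u':ℕ) := fun hc => h (Fin.ext hc)
    rw [if_neg hv, if_neg (fun hc => hv (hc.1.trans hc.2.symm))]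
    ring

private lemma col_orth (M : ℕ) (hM : 0 < M) (m m' : Fin M) :
    ∑ u : Fin M, Dmat M u m * Dmat M u m' = if m = m' then 1 else 0 := by
  have h1 : Dmat M * (Dmat M)ᵀ = 1 := by
    ext u u'
    rw [Matrix.mul_apply]
    simp only [Matrix.transpose_apply, Matrix.one_apply]
    exact row_orth M hM u u'
  have h2 := mul_eq_one_comm.mp h1
  have h3 := congrFun (congrFun h2 m) m'
  rw [Matrix.mul_apply] at h3
  simp only [Matrix.transpose_apply, Matrix.one_apply] at h3
  simpa using h3

private lemma orth_sum_norm {ι κ : Type*} [Fintype ι] [Fintype κ]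
    [DecidableEq ι] [DecidableEq κ]
    {E : Type*} [NormedAddCommGroup E] [InnerProductSpace ℝ E]
    (s : ι → κ → ℝ) (hs : ∀ i j, ∑ k, s i k * s j k = if i = j then (1:ℝ) else 0)
    (g : ι → E) :
    ∑ k, ‖∑ i, s i k • g i‖^2 = ∑ i, ‖g i‖^2 := by
  simp_rw [← real_inner_self_eq_norm_sq]
  have expand : ∀ k : κ, inner ℝ (∑ i, s i k • g i) (∑ i, s i k • g i)
      = ∑ i, ∑ j, (s i k * s j k) * inner ℝ (g i) (g j) := by
    intro k
    rw [sum_inner]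
    congr 1; funext i
    rw [inner_sum]
    congr 1; funext j
    rw [real_inner_smul_left, real_inner_smul_right]; ring
  simp_rw [expand]
  rw [Finset.sum_comm]
  have : ∀ i, ∑ k, ∑ j, (s i k * s j k) * inner ℝ (g i) (g j)
      = ∑ j, (∑ k, s i k * s j k) * inner ℝ (g i) (g j) := by
    intro i
    rw [Finset.sum_comm]
    congr 1; funext j
    rw [Finset.sum_mul]
  simp_rw [this, hs, ite_mul, one_mul, zero_mul]
  simp [Finset.sum_ite_eq]

private lemma orth_inv {ι κ : Type*} [Fintype ι] [Fintype κ]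
    [DecidableEq ι] [DecidableEq κ]
    {E : Type*} [AddCommGroup E] [Module ℝ E]
    (s : ι → κ → ℝ) (hs : ∀ k k', ∑ i, s i k * s i k' = if k = k' then (1:ℝ) else 0)
    (x : κ → E) (k : κ) :
    ∑ i, s i k • ∑ k', s i k' • x k' = x k := by
  simp_rw [Finset.smul_sum, smul_smul]
  rw [Finset.sum_comm]
  have : ∀ k', ∑ i, (s i k * s i k') • x k' = (∑ i, s i k * s i k') • x k' := by
    intro k'; rw [Finset.sum_smul]
  simp_rw [this, hs, ite_smul, one_smul, zero_smul]
  simp [Finset.sum_ite_eq]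

/-- The separable two-dimensional DCT coefficient array. -/
noncomputable def dctS (M N : ℕ) (p j : Fin M × Fin N) : ℝ :=
  Dmat M p.1 j.1 * Dmat N p.2 j.2

private lemma dctS_orth1 (M N : ℕ) (hM : 0 < M) (hN : 0 < N) (i i' : Fin M × Fin N) :
    ∑ j : Fin M × Fin N, dctS M N i j * dctS M N i' j = if i = i' then (1:ℝ) else 0 := by
  rw [Fintype.sum_prod_type]
  have : ∀ (m : Fin M) (n : Fin N),
      dctS M N i (m, n) * dctS M N i' (m, n)
        = (Dmat M i.1 m * Dmat M i'.1 m) * (Dmat N i.2 n * Dmat N i'.2 n) := by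
    intro m n; simp only [dctS]; ring
  simp_rw [this, ← Finset.mul_sum, ← Finset.sum_mul]
  rw [row_orth M hM i.1 i'.1, row_orth N hN i.2 i'.2]
  by_cases h : i = i'
  · simp [h]
  · rw [if_neg h]
    by_cases h1 : i.1 = i'.1
    · have h2 : i.2 ≠ i'.2 := fun hc => h (Prod.ext h1 hc)
      simp [h2]
    · simp [h1]

private lemma dctS_orth2 (M N : ℕ) (hM : 0 < M) (hN : 0 < N) (k k' : Fin M × Fin N) :
    ∑ i : Fin M × Fin N, dctS M N i k * dctS M N i k' = if k = k' then (1:ℝ) else 0 := by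
  rw [Fintype.sum_prod_type]
  have : ∀ (u : Fin M) (v : Fin N),
      dctS M N (u, v) k * dctS M N (u, v) k'
        = (Dmat M u k.1 * Dmat M u k'.1) * (Dmat N v k.2 * Dmat N v k'.2) := by
    intro u v; simp only [dctS]; ring
  simp_rw [this, ← Finset.mul_sum, ← Finset.sum_mul]
  rw [col_orth M hM k.1 k'.1, col_orth N hN k.2 k'.2]
  by_cases h : k = k'
  · simp [h]
  · rw [if_neg h]
    have := Prod.ext_iff.not.mp h
    by_cases h1 : k.1 = k'.1
    · have h2 : k.2 ≠ k'.2 := fun hc => h (Prod.ext h1 hc)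
      simp [h2]
    · simp [h1]

private lemma FQDCTL_apply (M N : ℕ) (q : Quaternion ℝ)
    (X : Matrix (Fin M) (Fin N) (Quaternion ℝ)) (u : Fin M) (v : Fin N) :
    FQDCTL M N q X u v = ∑ j : Fin M × Fin N, dctS M N (u, v) j • (q * X j.1 j.2) := by
  simp only [FQDCTL, Matrix.of_apply]
  rw [Fintype.sum_prod_type, Finset.smul_sum]
  congr 1; funext m
  rw [Finset.smul_sum]
  congr 1; funext n
  rw [smul_smul]
  congr 1
  simp only [dctS, dctKer, Dmat, Matrix.of_apply]
  ring

private lemma IQDCTL_apply (M N : ℕ) (q : Quaternion ℝ)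
    (C : Matrix (Fin M) (Fin N) (Quaternion ℝ)) (m : Fin M) (n : Fin N) :
    IQDCTL M N q C m n = ∑ i : Fin M × Fin N, dctS M N i (m, n) • ((-q) * C i.1 i.2) := by
  simp only [IQDCTL, Matrix.of_apply]
  rw [Fintype.sum_prod_type]
  congr 1; funext u
  congr 1; funext v
  rw [smul_smul]
  congr 1
  simp only [dctS, dctKer, Dmat, Matrix.of_apply]
  ring

/-- The residual of `A` against `FQDCT^L(X)` has the same Frobenius norm as the
residual of `IQDCT^L(A)` against `X`. -/
theorem fqdctL_residual_norm (M N : ℕ) (hM : 1 ≤ M) (hN : 1 ≤ N)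
    (q : Quaternion ℝ) (hre : q.re = 0) (hq : q ^ 2 = -1)
    (A X : Matrix (Fin M) (Fin N) (Quaternion ℝ)) :
    frob (A - FQDCTL M N q X) = frob (IQDCTL M N q A - X) := by
  have hM0 : 0 < M := hM
  have hN0 : 0 < N := hN
  have hq1 : (-q) * q = 1 := by
    rw [neg_mul, ← sq, hq, neg_neg]
  have hnq : ‖q‖ = 1 := by
    have h2 : ‖q‖^2 = 1 := by rw [sq, ← norm_mul, ← sq, hq, norm_neg, norm_one]
    nlinarith [norm_nonneg q]
  set R := A - FQDCTL M N q X with hR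
  have hinv : ∀ (m : Fin M) (n : Fin N), IQDCTL M N q (FQDCTL M N q X) m n = X m n := by
    intro m n
    rw [IQDCTL_apply]
    simp_rw [FQDCTL_apply, Finset.mul_sum, mul_smul_comm, ← mul_assoc, hq1, one_mul]
    exact orth_inv (dctS M N) (dctS_orth2 M N hM0 hN0)
      (fun j : Fin M × Fin N => X j.1 j.2) (m, n)
  have hlin : ∀ (m : Fin M) (n : Fin N),
      (IQDCTL M N q A - X) m n = IQDCTL M N q R m n := by
    intro m n
    rw [Matrix.sub_apply, IQDCTL_apply, ← hinv m n, IQDCTL_apply, IQDCTL_apply,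
      ← Finset.sum_sub_distrib]
    congr 1; funext i
    rw [hR, Matrix.sub_apply, mul_sub, smul_sub]
  unfold frob
  congr 1
  have key : ∑ m : Fin M, ∑ n : Fin N, ‖(IQDCTL M N q A - X) m n‖^2
      = ∑ m : Fin M, ∑ n : Fin N, ‖R m n‖^2 := by
    simp_rw [hlin]
    rw [← Fintype.sum_prod_type (f := fun k : Fin M × Fin N => ‖IQDCTL M N q R k.1 k.2‖^2)]
    have h1 : ∀ k : Fin M × Fin N,
        ‖IQDCTL M N q R k.1 k.2‖^2
          = ‖∑ i : Fin M × Fin N, dctS M N i k • ((-q) * R i.1 i.2)‖^2 := by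
      intro k; rw [IQDCTL_apply]
    simp_rw [h1]
    rw [orth_sum_norm (dctS M N) (dctS_orth1 M N hM0 hN0)
      (fun i : Fin M × Fin N => (-q) * R i.1 i.2)]
    have h2 : ∀ i : Fin M × Fin N, ‖(-q) * R i.1 i.2‖^2 = ‖R i.1 i.2‖^2 := by
      intro i; rw [norm_mul, norm_neg, hnq, one_mul]
    simp_rw [h2]
    rw [Fintype.sum_prod_type]
  rw [key]
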